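/- (Uniqueness of the conformal involution of a rectangle switching opposite sides.) Let a, b > 0 and let R = {z ∈ ℂ : 0 ≤ Re z ≤ a, 0 ≤ Im z ≤ b} be the closed rectangle, with left edge L = {z ∈ R : Re z = 0}, right edge R' = {z ∈ R : Re z = a}, bottom edge Bo = {z ∈ R : Im z = 0}, and top edge T = {z ∈ R : Im z = b}. Then there is exactly one continuous map f : R → R with f ∘ f = id which is complex-differentiable on the interior of R and satisfies f(L) ⊆ R', f(R') ⊆ L, f(Bo) ⊆ T, f(T) ⊆ Bo; namely f(z) = (a + b·i) − z. -/

import Mathlib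

open Complex Set

/-- **Uniqueness of the conformal involution of a rectangle switching
opposite sides.** Let `R` be the closed rectangle `[0,a] × [0,b]` in `ℂ`, with left,
right, bottom and top edges `L`, `R'`, `Bo`, `T`. Then there is exactly one continuous
involution `f` of `R`, holomorphic on the interior of `R`, mapping `L` into `R'`,
`R'` into `L`, `Bo` into `T` and `T` into `Bo`; namely `f(z) = (a + b·i) − z`. -/
theorem unique_conformal_involution_of_rectangle (a b : ℝ) (ha : 0 < a) (hb : 0 < b) :
    ∀ (R L R' Bo T : Set ℂ),
      R = {z : ℂ | 0 ≤ z.re ∧ z.re ≤ a ∧ 0 ≤ z.im ∧ z.im ≤ b} →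
      L = {z ∈ R | z.re = 0} → R' = {z ∈ R | z.re = a} →
      Bo = {z ∈ R | z.im = 0} → T = {z ∈ R | z.im = b} →
      ((ContinuousOn (fun z : ℂ => ((a : ℂ) + (b : ℂ) * Complex.I) - z) R ∧
        Set.MapsTo (fun z : ℂ => ((a : ℂ) + (b : ℂ) * Complex.I) - z) R R ∧
        (∀ z ∈ R, ((a : ℂ) + (b : ℂ) * Complex.I) -
            (((a : ℂ) + (b : ℂ) * Complex.I) - z) = z) ∧
        DifferentiableOn ℂ (fun z : ℂ => ((a : ℂ) + (b : ℂ) * Complex.I) - z)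
          (interior R) ∧
        Set.MapsTo (fun z : ℂ => ((a : ℂ) + (b : ℂ) * Complex.I) - z) L R' ∧
        Set.MapsTo (fun z : ℂ => ((a : ℂ) + (b : ℂ) * Complex.I) - z) R' L ∧
        Set.MapsTo (fun z : ℂ => ((a : ℂ) + (b : ℂ) * Complex.I) - z) Bo T ∧
        Set.MapsTo (fun z : ℂ => ((a : ℂ) + (b : ℂ) * Complex.I) - z) T Bo) ∧
      ∀ f : ℂ → ℂ, ContinuousOn f R → Set.MapsTo f R R → (∀ z ∈ R, f (f z) = z) →
        DifferentiableOn ℂ f (interior R) → Set.MapsTo f L R' → Set.MapsTo f R' L →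
        Set.MapsTo f Bo T → Set.MapsTo f T Bo →
        ∀ z ∈ R, f z = ((a : ℂ) + (b : ℂ) * Complex.I) - z) := by
  intro R L R' Bo T hR hL hR' hBo hT
  set c : ℂ := (a : ℂ) + (b : ℂ) * Complex.I with hc
  have hcre : c.re = a := by simp [hc]
  have hcim : c.im = b := by simp [hc]
  have hRmem : ∀ z : ℂ, z ∈ R ↔ 0 ≤ z.re ∧ z.re ≤ a ∧ 0 ≤ z.im ∧ z.im ≤ b := by
    intro z; rw [hR]; exact Iff.rfl
  have hLmem : ∀ z : ℂ, z ∈ L ↔ z ∈ R ∧ z.re = 0 := by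
    intro z; rw [hL]; exact Iff.rfl
  have hR'mem : ∀ z : ℂ, z ∈ R' ↔ z ∈ R ∧ z.re = a := by
    intro z; rw [hR']; exact Iff.rfl
  have hBomem : ∀ z : ℂ, z ∈ Bo ↔ z ∈ R ∧ z.im = 0 := by
    intro z; rw [hBo]; exact Iff.rfl
  have hTmem : ∀ z : ℂ, z ∈ T ↔ z ∈ R ∧ z.im = b := by
    intro z; rw [hT]; exact Iff.rfl
  have hsubre : ∀ z : ℂ, (c - z).re = a - z.re := by
    intro z; simp [hc]
  have hsubim : ∀ z : ℂ, (c - z).im = b - z.im := by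
    intro z; simp [hc]
  have hmaps : Set.MapsTo (fun z : ℂ => c - z) R R := by
    intro z hz
    obtain ⟨h1, h2, h3, h4⟩ := (hRmem z).1 hz
    refine (hRmem _).2 ?_
    rw [hsubre, hsubim]
    exact ⟨by linarith, by linarith, by linarith, by linarith⟩
  constructor
  · refine ⟨(continuous_const.sub continuous_id).continuousOn, hmaps, ?_, ?_, ?_, ?_, ?_, ?_⟩
    · intro z _; ring
    · exact (differentiableOn_const _).sub differentiableOn_id
    · intro z hz
      obtain ⟨hzR, hze⟩ := (hLmem z).1 hz
      exact (hR'mem _).2 ⟨hmaps hzR, by rw [hsubre, hze]; ring⟩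
    · intro z hz
      obtain ⟨hzR, hze⟩ := (hR'mem z).1 hz
      exact (hLmem _).2 ⟨hmaps hzR, by rw [hsubre, hze]; ring⟩
    · intro z hz
      obtain ⟨hzR, hze⟩ := (hBomem z).1 hz
      exact (hTmem _).2 ⟨hmaps hzR, by rw [hsubim, hze]; ring⟩
    · intro z hz
      obtain ⟨hzR, hze⟩ := (hTmem z).1 hz
      exact (hBomem _).2 ⟨hmaps hzR, by rw [hsubim, hze]; ring⟩
  · intro f hfc hfm hfi hfd hLR' hR'L hBoT hTBo
    -- topological facts about the rectangle
    have hRprod : R = Set.Icc (0:ℝ) a ×ℂ Set.Icc (0:ℝ) b := by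
      rw [hR]; ext z
      simp [Complex.mem_reProdIm, Set.mem_Icc, and_assoc]
    have hIntR : interior R = Set.Ioo (0:ℝ) a ×ℂ Set.Ioo (0:ℝ) b := by
      rw [hRprod, Complex.interior_reProdIm, interior_Icc, interior_Icc]
    have hClos : closure (interior R) = R := by
      rw [hIntR, Complex.closure_reProdIm, closure_Ioo ha.ne, closure_Ioo hb.ne, hRprod]
    have hfr : frontier (interior R) = R \ interior R := by
      rw [isOpen_interior.frontier_eq, hClos]
    -- the auxiliary functions
    set h : ℂ → ℂ := fun z => f z + z - c with hhdef
    set g : ℂ → ℂ := fun z => h z * h z with hgdef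
    have hhd : DifferentiableOn ℂ h (interior R) :=
      (hfd.add differentiableOn_id).sub (differentiableOn_const _)
    have hgd : DifferentiableOn ℂ g (interior R) := hhd.mul hhd
    have hhc : ContinuousOn h R := (hfc.add continuousOn_id).sub continuousOn_const
    have hgc : ContinuousOn g R := hhc.mul hhc
    have hhre : ∀ z : ℂ, (h z).re = (f z).re + z.re - a := by
      intro z; simp [hhdef, hc]
    have hhim : ∀ z : ℂ, (h z).im = (f z).im + z.im - b := by
      intro z; simp [hhdef, hc]
    -- Im g vanishes on the boundary of the rectangle
    have hbound : ∀ z ∈ R \ interior R, (g z).im = 0 := by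
      intro z hz
      obtain ⟨hzR, hzi⟩ := hz
      obtain ⟨r1, r2, r3, r4⟩ := (hRmem z).1 hzR
      have hedge : z.re = 0 ∨ z.re = a ∨ z.im = 0 ∨ z.im = b := by
        by_contra hcon
        push_neg at hcon
        obtain ⟨h1, h2, h3, h4⟩ := hcon
        refine hzi ?_
        rw [hIntR]
        exact Complex.mem_reProdIm.2
          ⟨⟨lt_of_le_of_ne r1 (Ne.symm h1), lt_of_le_of_ne r2 h2⟩,
           ⟨lt_of_le_of_ne r3 (Ne.symm h3), lt_of_le_of_ne r4 h4⟩⟩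
      have hkey : (h z).re = 0 ∨ (h z).im = 0 := by
        rcases hedge with he | he | he | he
        · left
          have := hLR' ((hLmem z).2 ⟨hzR, he⟩)
          rw [hhre, he, ((hR'mem _).1 this).2]; ring
        · left
          have := hR'L ((hR'mem z).2 ⟨hzR, he⟩)
          rw [hhre, he, ((hLmem _).1 this).2]; ring
        · right
          have := hBoT ((hBomem z).2 ⟨hzR, he⟩)
          rw [hhim, he, ((hTmem _).1 this).2]; ring
        · right
          have := hTBo ((hTmem z).2 ⟨hzR, he⟩)
          rw [hhim, he, ((hBomem _).1 this).2]; ring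
      have : (g z).im = (h z).re * (h z).im + (h z).im * (h z).re := by
        rw [hgdef]; exact Complex.mul_im _ _
      rcases hkey with hk | hk <;> rw [this, hk] <;> ring
    -- boundedness of the interior
    have hBdd : Bornology.IsBounded (interior R) := by
      have hball : Bornology.IsBounded (Metric.closedBall (0:ℂ) (a + b)) :=
        Metric.isBounded_closedBall
      refine hball.subset ?_
      intro z hz
      obtain ⟨r1, r2, r3, r4⟩ := (hRmem z).1 (interior_subset hz)
      rw [Metric.mem_closedBall, dist_zero_right]
      calc ‖z‖ ≤ |z.re| + |z.im| := Complex.norm_le_abs_re_add_abs_im z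
        _ ≤ a + b := by rw [_root_.abs_of_nonneg r1, _root_.abs_of_nonneg r3]; linarith
    -- Maximum modulus: Im g vanishes on all of R
    have him0 : ∀ z ∈ R, (g z).im = 0 := by
      intro z hz
      have hzc : z ∈ closure (interior R) := by rw [hClos]; exact hz
      have h1 : ‖Complex.exp (Complex.I * g z)‖ ≤ 1 := by
        refine Complex.norm_le_of_forall_mem_frontier_norm_le (U := interior R)
          (f := fun z => Complex.exp (Complex.I * g z)) hBdd ⟨?_, ?_⟩ ?_ hzc
        · exact (hgd.const_mul _).cexp
        · rw [hClos]; exact (continuousOn_const.mul hgc).cexp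
        · intro w hw
          rw [hfr] at hw
          rw [Complex.norm_exp]
          have : (Complex.I * g w).re = -(g w).im := by
            simp [Complex.mul_re]
          rw [this, hbound w hw, neg_zero, Real.exp_zero]
      have h2 : ‖Complex.exp (-Complex.I * g z)‖ ≤ 1 := by
        refine Complex.norm_le_of_forall_mem_frontier_norm_le (U := interior R)
          (f := fun z => Complex.exp (-Complex.I * g z)) hBdd ⟨?_, ?_⟩ ?_ hzc
        · exact (hgd.const_mul _).cexp
        · rw [hClos]; exact (continuousOn_const.mul hgc).cexp
        · intro w hw
          rw [hfr] at hw
          rw [Complex.norm_exp]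
          have : (-Complex.I * g w).re = (g w).im := by
            simp [Complex.mul_re]
          rw [this, hbound w hw, Real.exp_zero]
      rw [Complex.norm_exp] at h1 h2
      have e1 : (Complex.I * g z).re = -(g z).im := by simp [Complex.mul_re]
      have e2 : (-Complex.I * g z).re = (g z).im := by simp [Complex.mul_re]
      rw [e1] at h1
      rw [e2] at h2
      have i1 : -(g z).im ≤ 0 := by
        by_contra hcon
        push_neg at hcon
        exact absurd h1 (not_le.2 (by calc (1:ℝ) = Real.exp 0 := Real.exp_zero.symm
          _ < Real.exp (-(g z).im) := Real.exp_lt_exp.2 hcon))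
      have i2 : (g z).im ≤ 0 := by
        by_contra hcon
        push_neg at hcon
        exact absurd h2 (not_le.2 (by calc (1:ℝ) = Real.exp 0 := Real.exp_zero.symm
          _ < Real.exp ((g z).im) := Real.exp_lt_exp.2 hcon))
      linarith
    -- convexity, hence preconnectedness, of the interior
    have hconv : Convex ℝ R := by
      have : R = {z : ℂ | 0 ≤ z.re} ∩ {z : ℂ | z.re ≤ a} ∩
          {z : ℂ | 0 ≤ z.im} ∩ {z : ℂ | z.im ≤ b} := by
        rw [hR]; ext z
        simp [Set.mem_inter_iff, and_assoc]
      rw [this]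
      exact Convex.inter (Convex.inter (Convex.inter
        (convex_halfSpace_re_ge 0) (convex_halfSpace_re_le a))
        (convex_halfSpace_im_ge 0)) (convex_halfSpace_im_le b)
    have hpre : IsPreconnected (interior R) := hconv.interior.isPreconnected
    have hga : AnalyticOnNhd ℂ g (interior R) := hgd.analyticOnNhd isOpen_interior
    -- open mapping theorem: g must be constant
    rcases hga.is_constant_or_isOpen hpre with ⟨w, hw⟩ | hopen
    · -- g is constant on the interior; extend to R by continuity
      have hgR : ∀ z ∈ R, g z = w := by
        intro z hz
        have hzc : z ∈ closure (interior R) := by rw [hClos]; exact hz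
        haveI hne : (nhdsWithin z (interior R)).NeBot :=
          mem_closure_iff_nhdsWithin_neBot.mp hzc
        have t1 : Filter.Tendsto g (nhdsWithin z (interior R)) (nhds (g z)) :=
          (hgc z hz).mono_left (nhdsWithin_mono z interior_subset)
        have t2 : Filter.Tendsto g (nhdsWithin z (interior R)) (nhds w) := by
          refine Filter.Tendsto.congr' ?_ tendsto_const_nhds
          filter_upwards [self_mem_nhdsWithin] with x hx
          exact (hw x hx).symm
        exact tendsto_nhds_unique t1 t2
      have h0R : (0:ℂ) ∈ R := (hRmem 0).2 (by simp [ha.le, hb.le])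
      have hf0 : f 0 = c := by
        have h1 := hLR' ((hLmem 0).2 ⟨h0R, by simp⟩)
        have h2 := hBoT ((hBomem 0).2 ⟨h0R, by simp⟩)
        apply Complex.ext
        · rw [((hR'mem _).1 h1).2, hcre]
        · rw [((hTmem _).1 h2).2, hcim]
      have hw0 : w = 0 := by
        simpa [hgdef, hhdef, hf0] using (hgR 0 h0R).symm
      intro z hz
      have hg0 : h z * h z = 0 := by
        have h1 : g z = 0 := (hgR z hz).trans hw0
        simpa [hgdef] using h1
      have hh0 : h z = 0 := mul_self_eq_zero.mp hg0
      have : f z + z = c := by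
        have : f z + z - c = 0 := hh0
        linear_combination this
      linear_combination this
    · -- the open case is impossible: the image lies in the real line
      exfalso
      have hp : ((a/2 : ℝ) + (b/2 : ℝ) * Complex.I) ∈ interior R := by
        rw [hIntR]
        have hre : ((a/2 : ℝ) + (b/2 : ℝ) * Complex.I).re = a/2 := by simp
        have himp : ((a/2 : ℝ) + (b/2 : ℝ) * Complex.I).im = b/2 := by simp
        refine Complex.mem_reProdIm.2 ⟨?_, ?_⟩
        · rw [hre]; exact Set.mem_Ioo.2 ⟨by linarith, by linarith⟩
        · rw [himp]; exact Set.mem_Ioo.2 ⟨by linarith, by linarith⟩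
      have hio : IsOpen (g '' interior R) := hopen (interior R) subset_rfl isOpen_interior
      set p : ℂ := (a/2 : ℝ) + (b/2 : ℝ) * Complex.I with hp'
      have hgp : g p ∈ g '' interior R := ⟨p, hp, rfl⟩
      obtain ⟨ε, hε, hball⟩ := Metric.isOpen_iff.1 hio (g p) hgp
      have hmem : g p + (ε/2 : ℝ) * Complex.I ∈ Metric.ball (g p) ε := by
        rw [Metric.mem_ball, Complex.dist_eq]
        have : g p + (ε/2 : ℝ) * Complex.I - g p = (ε/2 : ℝ) * Complex.I := by ring
        rw [this]
        rw [norm_mul, Complex.norm_real, Complex.norm_I, mul_one, Real.norm_eq_abs, abs_of_pos (by linarith)]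
        linarith
      obtain ⟨x, hx, hgx⟩ := hball hmem
      have hx0 : (g x).im = 0 := him0 x (interior_subset hx)
      have hp0 : (g p).im = 0 := him0 p (interior_subset hp)
      have : (g x).im = ε/2 := by
        rw [hgx, Complex.add_im, hp0, Complex.mul_im]
        simp
      rw [hx0] at this
      linarith
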